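/- Let n ≥ 3 be an integer and let k be an integer with 1 ≤ k ≤ n − 1. Call a k-element subset A of Z_n \ {0} bad if no ordering of the elements of A has pairwise distinct partial sums. Then the number of bad k-subsets of Z_n \ {0} is at most (k(k−1)/n) · C(n−1, k); equivalently, n times the number of bad k-subsets is at most k(k−1) · C(n−1, k). -/

import Mathlib

/-- The partial sums of the ordering `l` are pairwise distinct. -/
def distinctPartialSums {n : ℕ} (l : List (ZMod n)) : Prop :=
  ∀ i j : ℕ, i < j → j < l.length → (l.take (i + 1)).sum ≠ (l.take (j + 1)).sum

open Finset Function

namespace CardBadAux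

def seg (k i m : ℕ) : Finset (Fin k) :=
  univ.filter (fun t => i < t.val ∧ t.val ≤ i + m)

lemma mem_seg {k i m : ℕ} {t : Fin k} : t ∈ seg k i m ↔ i < t.val ∧ t.val ≤ i + m := by
  simp [seg]

lemma card_seg {k i m : ℕ} (h : i + m < k) : (seg k i m).card = m := by
  have hik : i < k := by omega
  have : seg k i m = Finset.Ioc (⟨i, hik⟩ : Fin k) ⟨i + m, h⟩ := by
    ext t
    simp [mem_seg, Finset.mem_Ioc, Fin.lt_def, Fin.le_def]
  rw [this, Fin.card_Ioc]
  simp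

lemma card_filter_inj_mem {β : Type*} [Fintype β] [DecidableEq β] (S : Finset β) (r : ℕ)
    [DecidablePred (fun g : Fin r → β => Function.Injective g ∧ ∀ t, g t ∈ S)] :
    (univ.filter (fun g : Fin r → β => Function.Injective g ∧ ∀ t, g t ∈ S)).card
      = S.card.descFactorial r := by
  classical
  have e : {g : Fin r → β // Function.Injective g ∧ ∀ t, g t ∈ S} ≃ (Fin r ↪ S) :=
    { toFun := fun g => ⟨fun t => ⟨g.1 t, g.2.2 t⟩, fun a b h => g.2.1 (congrArg Subtype.val h)⟩
      invFun := fun e => ⟨fun t => (e t).1,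
        ⟨fun a b h => e.injective (Subtype.ext h), fun t => (e t).2⟩⟩
      left_inv := fun g => rfl
      right_inv := fun e => by ext t; rfl }
  rw [← Fintype.card_subtype, Fintype.card_congr e, Fintype.card_embedding_eq,
    Fintype.card_coe, Fintype.card_fin]

open scoped Classical in
noncomputable def FSet (n k i m : ℕ) [NeZero n] : Finset (Fin k → ZMod n) :=
  univ.filter (fun f => Function.Injective f ∧ (∀ t, f t ≠ 0) ∧ i + m < k ∧
    ∑ t ∈ seg k i m, f t = 0)

lemma mem_FSet {n k i m : ℕ} [NeZero n] {f : Fin k → ZMod n} :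
    f ∈ FSet n k i m ↔ Function.Injective f ∧ (∀ t, f t ≠ 0) ∧ i + m < k ∧
      ∑ t ∈ seg k i m, f t = 0 := by
  simp [FSet]

/-- The "key" map: restriction to segment positions `i+1, …, i+m-1`. -/
def κmap {α : Type*} (k i m : ℕ) [NeZero k] (f : Fin k → α) (t : Fin (m - 1)) : α :=
  f ⟨(i + 1 + t.val) % k, Nat.mod_lt _ (Nat.pos_of_ne_zero (NeZero.ne k))⟩

lemma κmap_apply {α : Type*} {k i m : ℕ} [NeZero k] (h : i + m < k) (f : Fin k → α)
    (t : Fin (m - 1)) :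
    κmap k i m f t = f ⟨i + 1 + t.val, by have := t.isLt; omega⟩ := by
  unfold κmap
  congr 1
  exact Fin.ext (by simp [Nat.mod_eq_of_lt (show i + 1 + t.val < k by have := t.isLt; omega)])

/-- members of the same κ-fiber agree on the whole segment -/
lemma agree_on_seg {n k i m : ℕ} [NeZero n] [NeZero k] (himk : i + m < k) (hm : 1 ≤ m)
    {f f' : Fin k → ZMod n} (hf : f ∈ FSet n k i m) (hf' : f' ∈ FSet n k i m)
    (hkeq : κmap k i m f = κmap k i m f') :
    ∀ t ∈ seg k i m, f t = f' t := by
  have hmid : ∀ t : Fin k, i < t.val → t.val < i + m → f t = f' t := by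
    intro t ht1 ht2
    have hv : t.val - i - 1 < m - 1 := by omega
    have h1 : f t = κmap k i m f ⟨t.val - i - 1, hv⟩ := by
      rw [κmap_apply himk]; congr 1; exact Fin.ext (by simp; omega)
    have h2 : f' t = κmap k i m f' ⟨t.val - i - 1, hv⟩ := by
      rw [κmap_apply himk]; congr 1; exact Fin.ext (by simp; omega)
    rw [h1, h2, hkeq]
  set jl : Fin k := ⟨i + m, himk⟩ with hjl
  have hjlseg : jl ∈ seg k i m := by rw [mem_seg]; constructor <;> simp [hjl]; omega
  have hmid' : ∀ t ∈ (seg k i m).erase jl, f t = f' t := by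
    intro t ht
    rw [mem_erase] at ht
    obtain ⟨htne, htseg⟩ := ht
    rw [mem_seg] at htseg
    refine hmid t htseg.1 ?_
    rcases lt_or_eq_of_le htseg.2 with h | h
    · exact h
    · exact absurd (Fin.ext h) htne
  intro t ht
  by_cases hlast : t = jl
  · subst hlast
    have h1 := Finset.add_sum_erase _ f hjlseg
    have h2 := Finset.add_sum_erase _ f' hjlseg
    rw [(mem_FSet.mp hf).2.2.2] at h1
    rw [(mem_FSet.mp hf').2.2.2] at h2
    have hE : ∑ x ∈ (seg k i m).erase jl, f x = ∑ x ∈ (seg k i m).erase jl, f' x :=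
      Finset.sum_congr rfl hmid'
    have h3 := h1.trans h2.symm
    rw [hE] at h3
    exact add_right_cancel h3
  · exact hmid' t (mem_erase.mpr ⟨hlast, ht⟩)

lemma card_FSet_le {n k : ℕ} [NeZero n] (i m : ℕ) (hm : 2 ≤ m)
    (himk : i + m < k) :
    (FSet n k i m).card ≤
      (n - 1).descFactorial (m - 1) * (n - 1 - m).descFactorial (k - m) := by
  classical
  haveI : NeZero k := ⟨by omega⟩
  have himg : ((FSet n k i m).image (κmap k i m)).card ≤ (n - 1).descFactorial (m - 1) := by
    have hsub : (FSet n k i m).image (κmap k i m) ⊆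
        univ.filter (fun g : Fin (m - 1) → ZMod n =>
          Function.Injective g ∧ ∀ t, g t ∈ univ.erase (0 : ZMod n)) := by
      intro g hg
      obtain ⟨f, hf, rfl⟩ := mem_image.mp hg
      obtain ⟨hinj, h0, -, -⟩ := mem_FSet.mp hf
      rw [mem_filter]
      refine ⟨mem_univ _, ?_, ?_⟩
      · intro a b hab
        rw [κmap_apply himk, κmap_apply himk] at hab
        have h2 := congrArg Fin.val (hinj hab)
        simp only [] at h2
        exact Fin.ext (by omega)
      · intro t
        rw [κmap_apply himk]
        exact mem_erase.mpr ⟨h0 _, mem_univ _⟩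
    calc ((FSet n k i m).image (κmap k i m)).card ≤ _ := card_le_card hsub
      _ = ((univ.erase (0 : ZMod n)).card).descFactorial (m - 1) := card_filter_inj_mem _ _
      _ = (n - 1).descFactorial (m - 1) := by
          rw [card_erase_of_mem (mem_univ _), card_univ, ZMod.card]
  have hfib : ∀ g ∈ (FSet n k i m).image (κmap k i m),
      ((FSet n k i m).filter (fun f => κmap k i m f = g)).card
        ≤ (n - 1 - m).descFactorial (k - m) := by
    intro g hg
    obtain ⟨f₀, hf₀, hgf₀⟩ := mem_image.mp hg
    obtain ⟨hinj₀, h0₀, -, -⟩ := mem_FSet.mp hf₀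
    have hcard_used : ((seg k i m).image f₀).card = m := by
      rw [card_image_of_injective _ hinj₀, card_seg himk]
    have h0used : (0 : ZMod n) ∉ (seg k i m).image f₀ := by
      intro h; obtain ⟨t, ht, h⟩ := mem_image.mp h; exact h0₀ t h
    have hcardS2 : ((univ : Finset (ZMod n)) \ insert 0 ((seg k i m).image f₀)).card
        = n - 1 - m := by
      rw [card_sdiff_of_subset (subset_univ _), card_univ, ZMod.card,
        card_insert_of_notMem h0used, hcard_used]
      omega
    have hcc : ((univ : Finset (Fin k)) \ seg k i m).card = k - m := by
      rw [card_sdiff_of_subset (subset_univ _), card_univ, Fintype.card_fin, card_seg himk]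
    have hembmem : ∀ t : Fin (k - m),
        (((univ \ seg k i m).orderIsoOfFin hcc t : Fin k)) ∈ univ \ seg k i m :=
      fun t => ((univ \ seg k i m).orderIsoOfFin hcc t).2
    have hembinj : Function.Injective
        (fun t : Fin (k - m) => ((univ \ seg k i m).orderIsoOfFin hcc t : Fin k)) := by
      intro a b hab
      exact (OrderIso.injective _) (Subtype.ext hab)
    set emb := (fun t : Fin (k - m) => ((univ \ seg k i m).orderIsoOfFin hcc t : Fin k))
      with hemb
    have hmaps : ∀ f ∈ (FSet n k i m).filter (fun f => κmap k i m f = g),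
        (fun t => f (emb t)) ∈ univ.filter (fun h : Fin (k - m) → ZMod n =>
          Function.Injective h ∧ ∀ t, h t ∈ univ \ insert 0 ((seg k i m).image f₀)) := by
      intro f hf
      rw [mem_filter] at hf
      obtain ⟨hfF, hκf⟩ := hf
      obtain ⟨hinj, h0, -, -⟩ := mem_FSet.mp hfF
      have hagree : ∀ t ∈ seg k i m, f t = f₀ t :=
        agree_on_seg himk (by omega) hfF hf₀ (by rw [hκf, hgf₀])
      rw [mem_filter]
      refine ⟨mem_univ _, fun a b hab => hembinj (hinj hab), fun t => ?_⟩
      rw [mem_sdiff]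
      refine ⟨mem_univ _, ?_⟩
      intro hmem
      rcases mem_insert.mp hmem with h | h
      · exact h0 _ h
      · obtain ⟨s, hs, hfs⟩ := mem_image.mp h
        have hfs' : f₀ s = f (emb t) := hfs
        have hfse : f s = f (emb t) := by rw [hagree s hs]; exact hfs'
        have h4 := hinj hfse
        have hnot : emb t ∉ seg k i m := (mem_sdiff.mp (hembmem t)).2
        rw [← h4] at hnot; exact hnot hs
    have hinjOn : Set.InjOn (fun (f : Fin k → ZMod n) (t : Fin (k - m)) => f (emb t))
        ((FSet n k i m).filter (fun f => κmap k i m f = g)) := by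
      intro f hf f' hf' hρeq
      rw [Finset.mem_coe, mem_filter] at hf hf'
      funext t
      by_cases ht : t ∈ seg k i m
      · have h1 : ∀ s ∈ seg k i m, f s = f' s :=
          agree_on_seg himk (by omega) hf.1 hf'.1 (by rw [hf.2, hf'.2])
        exact h1 t ht
      · have htc : t ∈ univ \ seg k i m := mem_sdiff.mpr ⟨mem_univ _, ht⟩
        obtain ⟨u, hut⟩ : ∃ u, emb u = t :=
          ⟨((univ \ seg k i m).orderIsoOfFin hcc).symm ⟨t, htc⟩, by
            rw [hemb]; simp⟩
        calc f t = f (emb u) := (congrArg f hut).symm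
          _ = f' (emb u) := congrFun hρeq u
          _ = f' t := congrArg f' hut
    calc ((FSet n k i m).filter (fun f => κmap k i m f = g)).card
        ≤ (univ.filter (fun h : Fin (k - m) → ZMod n =>
            Function.Injective h ∧ ∀ t, h t ∈ univ \ insert 0 ((seg k i m).image f₀))).card :=
          Finset.card_le_card_of_injOn _ hmaps hinjOn
      _ = (((univ : Finset (ZMod n)) \ insert 0 ((seg k i m).image f₀)).card).descFactorial
            (k - m) := card_filter_inj_mem _ _
      _ = (n - 1 - m).descFactorial (k - m) := by rw [hcardS2]
  calc (FSet n k i m).card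
      ≤ (n - 1 - m).descFactorial (k - m) * ((FSet n k i m).image (κmap k i m)).card :=
        Finset.card_le_mul_card_image _ _ hfib
    _ ≤ (n - 1 - m).descFactorial (k - m) * ((n - 1).descFactorial (m - 1)) :=
        Nat.mul_le_mul_left _ himg
    _ = _ := Nat.mul_comm _ _

lemma desc_id {n k m : ℕ} (hm : 2 ≤ m) (hmk : m ≤ k - 1) (hk1 : 1 ≤ k) (hkn : k ≤ n - 1)
    (hn : 3 ≤ n) :
    (n - m) * ((n - 1).descFactorial (m - 1) * (n - 1 - m).descFactorial (k - m))
      = (n - 1).descFactorial k := by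
  have h1 := Nat.descFactorial_mul_descFactorial (k := m - 1) (m := k) (n := n - 1)
    (by omega)
  have h2 : n - 1 - (m - 1) = n - m := by omega
  have h3 : k - (m - 1) = (k - m) + 1 := by omega
  have h4 : n - m = (n - 1 - m) + 1 := by omega
  rw [h2, h3] at h1
  rw [h4] at h1 ⊢
  rw [Nat.succ_descFactorial_succ] at h1
  rw [← h1]
  ring

lemma num_ineq {n k m : ℕ} (hm : 2 ≤ m) (hmk : m ≤ k - 1) (hk1 : 1 ≤ k) (hkn : k ≤ n - 1)
    (hn : 3 ≤ n) : (n - 2) * (k - m) ≤ (k - 2) * (n - m) := by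
  obtain ⟨a, rfl⟩ : ∃ a, m = 2 + a := ⟨m - 2, by omega⟩
  obtain ⟨c, rfl⟩ : ∃ c, k = 3 + a + c := ⟨k - 3 - a, by omega⟩
  obtain ⟨d, rfl⟩ : ∃ d, n = 4 + a + c + d := ⟨n - 4 - a - c, by omega⟩
  have e1 : 4 + a + c + d - 2 = 2 + a + c + d := by omega
  have e2 : 3 + a + c - (2 + a) = 1 + c := by omega
  have e3 : 3 + a + c - 2 = 1 + a + c := by omega
  have e4 : 4 + a + c + d - (2 + a) = 2 + c + d := by omega
  rw [e1, e2, e3, e4]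
  nlinarith

lemma num_ineq2 {n k : ℕ} (hk1 : 1 ≤ k) (hkn : k ≤ n - 1) (hn : 3 ≤ n) :
    (k - 2) * (n * ((k - 2))) ≤ k * (k - 1) * (n - 2) := by
  rcases Nat.lt_or_ge k 3 with h | h
  · have : k - 2 = 0 := by omega
    simp [this]
  · obtain ⟨a, ha⟩ := Nat.exists_eq_add_of_le h
    obtain ⟨b, hb⟩ := Nat.exists_eq_add_of_le (show k + 1 ≤ n by omega)
    subst ha
    have h2 : 3 + a - 2 = a + 1 := by omega
    have h3 : 3 + a - 1 = a + 2 := by omega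
    have h4 : n - 2 = a + 2 + b := by omega
    rw [h2, h3, h4, hb]
    ring_nf
    nlinarith []

open scoped Classical in
noncomputable def FailSet (n k : ℕ) [NeZero n] : Finset (Fin k → ZMod n) :=
  univ.filter (fun f => Function.Injective f ∧ (∀ t, f t ≠ 0) ∧ ∃ i j : ℕ, i < j ∧ j < k ∧
    (∑ t ∈ univ.filter (fun t : Fin k => t.val < i + 1), f t)
      = ∑ t ∈ univ.filter (fun t : Fin k => t.val < j + 1), f t)

lemma mem_FailSet {n k : ℕ} [NeZero n] {f : Fin k → ZMod n} :
    f ∈ FailSet n k ↔ Function.Injective f ∧ (∀ t, f t ≠ 0) ∧ ∃ i j : ℕ, i < j ∧ j < k ∧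
      (∑ t ∈ univ.filter (fun t : Fin k => t.val < i + 1), f t)
        = ∑ t ∈ univ.filter (fun t : Fin k => t.val < j + 1), f t := by
  simp [FailSet]

open scoped Classical in
noncomputable def fiberSet (n k : ℕ) [NeZero n] (A : Finset (ZMod n)) :
    Finset (Fin k → ZMod n) :=
  univ.filter (fun f => Function.Injective f ∧ image f univ = A)

lemma mem_fiberSet {n k : ℕ} [NeZero n] {A : Finset (ZMod n)} {f : Fin k → ZMod n} :
    f ∈ fiberSet n k A ↔ Function.Injective f ∧ image f univ = A := by
  simp [fiberSet]

lemma factorial_le_card_fiberSet {n k : ℕ} [NeZero n] {A : Finset (ZMod n)}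
    (hcard : A.card = k) : k.factorial ≤ (fiberSet n k A).card := by
  classical
  have e := A.equivFinOfCardEq hcard
  rw [show k.factorial = (univ : Finset (Equiv.Perm (Fin k))).card by
    rw [card_univ, Fintype.card_perm, Fintype.card_fin]]
  apply Finset.card_le_card_of_injOn (fun σ => fun t => ((e.symm (σ t) : A) : ZMod n))
  · intro σ _
    rw [Finset.mem_coe, mem_fiberSet]
    constructor
    · intro a b hab
      exact σ.injective (e.symm.injective (Subtype.ext hab))
    · ext x
      simp only [mem_image, mem_univ, true_and]
      constructor
      · rintro ⟨t, rfl⟩; exact (e.symm (σ t)).2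
      · intro hx
        exact ⟨σ.symm (e ⟨x, hx⟩), by simp⟩
  · intro σ _ σ' _ hss
    ext t
    have h1 := congrFun hss t
    have h2 : e.symm (σ t) = e.symm (σ' t) := Subtype.ext h1
    have := e.symm.injective h2
    exact congrArg Fin.val this

lemma fiberSet_subset_FailSet {n k : ℕ} [NeZero n] {A : Finset (ZMod n)}
    (h0A : (0 : ZMod n) ∉ A)
    (hbad : ¬ ∃ l : List (ZMod n), l.Nodup ∧ l.toFinset = A ∧ distinctPartialSums l) :
    fiberSet n k A ⊆ FailSet n k := by
  intro f hf
  rw [mem_fiberSet] at hf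
  obtain ⟨hinj, himg⟩ := hf
  rw [mem_FailSet]
  have h0 : ∀ t, f t ≠ 0 := by
    intro t ht
    exact h0A (himg ▸ mem_image.mpr ⟨t, mem_univ _, ht⟩)
  refine ⟨hinj, h0, ?_⟩
  by_contra hno
  push_neg at hno
  apply hbad
  refine ⟨List.ofFn f, List.nodup_ofFn.mpr hinj, ?_, ?_⟩
  · ext a
    rw [List.mem_toFinset, List.mem_ofFn, ← himg]
    simp [Set.mem_range, mem_image, eq_comm]
  · intro i j hij hj
    rw [List.length_ofFn] at hj
    rw [List.sum_take_ofFn, List.sum_take_ofFn]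
    exact hno i j hij hj

lemma FailSet_subset {n k : ℕ} [NeZero n] :
    FailSet n k ⊆ (Finset.Icc 2 (k - 1) ×ˢ Finset.range k).biUnion
      (fun p => FSet n k p.2 p.1) := by
  intro f hf
  rw [mem_FailSet] at hf
  obtain ⟨hinj, h0, i, j, hij, hjk, hsum⟩ := hf
  have hsub : univ.filter (fun t : Fin k => t.val < i + 1)
      ⊆ univ.filter (fun t : Fin k => t.val < j + 1) := by
    intro t ht
    rw [mem_filter] at ht ⊢
    exact ⟨mem_univ _, by omega⟩
  have hsd := Finset.sum_sdiff (f := f) hsub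
  have hset : univ.filter (fun t : Fin k => t.val < j + 1)
      \ univ.filter (fun t : Fin k => t.val < i + 1) = seg k i (j - i) := by
    ext t
    simp only [mem_sdiff, mem_filter, mem_seg, mem_univ, true_and]
    omega
  rw [hset, ← hsum] at hsd
  have hz : ∑ t ∈ seg k i (j - i), f t = 0 := by
    have h := hsd
    rwa [add_eq_right] at h
  have hm : 2 ≤ j - i := by
    by_contra hlt
    have hij1 : i + 1 < k := by omega
    have hseg1 : seg k i (j - i) = {(⟨i + 1, hij1⟩ : Fin k)} := by
      ext t
      simp only [mem_seg, Finset.mem_singleton, Fin.ext_iff]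
      omega
    rw [hseg1, sum_singleton] at hz
    exact h0 _ hz
  rw [mem_biUnion]
  refine ⟨(j - i, i), ?_, ?_⟩
  · rw [Finset.mem_product]
    exact ⟨Finset.mem_Icc.mpr ⟨hm, by omega⟩, Finset.mem_range.mpr (by omega)⟩
  · rw [mem_FSet]
    exact ⟨hinj, h0, by omega, hz⟩

end CardBadAux

theorem card_bad_subsets_le
    (n : ℕ) (hn : 3 ≤ n) (k : ℕ) (hk1 : 1 ≤ k) (hk2 : k ≤ n - 1) :
    n * {A : Finset (ZMod n) |
          (0 : ZMod n) ∉ A ∧ A.card = k ∧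
          ¬ ∃ l : List (ZMod n), l.Nodup ∧ l.toFinset = A ∧
              distinctPartialSums l}.ncard
      ≤ k * (k - 1) * Nat.choose (n - 1) k := by
  classical
  haveI : NeZero n := ⟨by omega⟩
  open CardBadAux in
  have hfin : {A : Finset (ZMod n) |
      (0 : ZMod n) ∉ A ∧ A.card = k ∧
      ¬ ∃ l : List (ZMod n), l.Nodup ∧ l.toFinset = A ∧
          distinctPartialSums l}.Finite := Set.toFinite _
  rw [Set.ncard_eq_toFinset_card _ hfin]
  set B := hfin.toFinset with hB
  have hmemB : ∀ A ∈ B, (0 : ZMod n) ∉ A ∧ A.card = k ∧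
      ¬ ∃ l : List (ZMod n), l.Nodup ∧ l.toFinset = A ∧ distinctPartialSums l := by
    intro A hA
    rw [hB, Set.Finite.mem_toFinset] at hA
    exact hA
  -- Step 1 : each bad set contributes k! failing tuples
  have hC1 : B.card * k.factorial ≤ (CardBadAux.FailSet n k).card := by
    have hdisj : ∀ A ∈ B, ∀ A' ∈ B, A ≠ A' →
        Disjoint (CardBadAux.fiberSet n k A) (CardBadAux.fiberSet n k A') := by
      intro A _ A' _ hne
      rw [Finset.disjoint_left]
      intro f hf hf'
      rw [CardBadAux.mem_fiberSet] at hf hf'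
      exact hne (by rw [← hf.2, hf'.2])
    calc B.card * k.factorial = ∑ _A ∈ B, k.factorial := by rw [sum_const, smul_eq_mul]
      _ ≤ ∑ A ∈ B, (CardBadAux.fiberSet n k A).card :=
          sum_le_sum (fun A hA => CardBadAux.factorial_le_card_fiberSet (hmemB A hA).2.1)
      _ = (B.biUnion (CardBadAux.fiberSet n k)).card := (Finset.card_biUnion hdisj).symm
      _ ≤ (CardBadAux.FailSet n k).card := card_le_card (biUnion_subset.mpr
          (fun A hA => CardBadAux.fiberSet_subset_FailSet (hmemB A hA).1 (hmemB A hA).2.2))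
  -- Step 2 : union bound over collision positions
  have hC2 : (CardBadAux.FailSet n k).card ≤
      ∑ m ∈ Finset.Icc 2 (k - 1), ∑ i ∈ Finset.range k, (CardBadAux.FSet n k i m).card := by
    calc (CardBadAux.FailSet n k).card
        ≤ ((Finset.Icc 2 (k - 1) ×ˢ Finset.range k).biUnion
            (fun p => CardBadAux.FSet n k p.2 p.1)).card :=
          card_le_card CardBadAux.FailSet_subset
      _ ≤ ∑ p ∈ Finset.Icc 2 (k - 1) ×ˢ Finset.range k, (CardBadAux.FSet n k p.2 p.1).card :=
          card_biUnion_le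
      _ = _ := Finset.sum_product _ _ _
  -- Step 3 : per-m bound
  have hinner : ∀ m ∈ Finset.Icc 2 (k - 1),
      ∑ i ∈ Finset.range k, (CardBadAux.FSet n k i m).card ≤
        (k - m) * ((n - 1).descFactorial (m - 1) * (n - 1 - m).descFactorial (k - m)) := by
    intro m hmIcc
    rw [Finset.mem_Icc] at hmIcc
    set Q := (n - 1).descFactorial (m - 1) * (n - 1 - m).descFactorial (k - m) with hQ
    calc ∑ i ∈ Finset.range k, (CardBadAux.FSet n k i m).card
        ≤ ∑ i ∈ Finset.range k, if i + m < k then Q else 0 := by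
          apply sum_le_sum
          intro i _
          by_cases h : i + m < k
          · rw [if_pos h]; exact CardBadAux.card_FSet_le i m hmIcc.1 h
          · rw [if_neg h, Nat.le_zero, Finset.card_eq_zero,
              Finset.eq_empty_iff_forall_notMem]
            intro f hf
            exact h (CardBadAux.mem_FSet.mp hf).2.2.1
      _ = ∑ i ∈ Finset.range k, if i ∈ Finset.range (k - m) then Q else 0 := by
          apply sum_congr rfl
          intro i _
          have hiff : (i + m < k) ↔ i ∈ Finset.range (k - m) := by
            rw [Finset.mem_range]; omega
          rw [if_congr hiff rfl rfl]
      _ = ∑ _i ∈ Finset.range k ∩ Finset.range (k - m), Q := Finset.sum_ite_mem _ _ _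
      _ = (k - m) * Q := by
          rw [Finset.inter_eq_right.mpr (Finset.range_subset_range.mpr (by omega)),
            sum_const, card_range, smul_eq_mul]
  -- Step 4 : arithmetic
  have hmain : n * ((n - 2) * (CardBadAux.FailSet n k).card)
      ≤ k * (k - 1) * (n - 2) * (n - 1).descFactorial k := by
    calc n * ((n - 2) * (CardBadAux.FailSet n k).card)
        ≤ n * ((n - 2) * ∑ m ∈ Finset.Icc 2 (k - 1), ∑ i ∈ Finset.range k,
            (CardBadAux.FSet n k i m).card) :=
          Nat.mul_le_mul_left _ (Nat.mul_le_mul_left _ hC2)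
      _ = ∑ m ∈ Finset.Icc 2 (k - 1), n * ((n - 2) * ∑ i ∈ Finset.range k,
            (CardBadAux.FSet n k i m).card) := by rw [Finset.mul_sum, Finset.mul_sum]
      _ ≤ ∑ _m ∈ Finset.Icc 2 (k - 1), n * ((k - 2) * (n - 1).descFactorial k) := by
          apply sum_le_sum
          intro m hm
          have hm' := Finset.mem_Icc.mp hm
          apply Nat.mul_le_mul_left
          set Q := (n - 1).descFactorial (m - 1) * (n - 1 - m).descFactorial (k - m) with hQ
          calc (n - 2) * ∑ i ∈ Finset.range k, (CardBadAux.FSet n k i m).card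
              ≤ (n - 2) * ((k - m) * Q) := Nat.mul_le_mul_left _ (hinner m hm)
            _ = ((n - 2) * (k - m)) * Q := by ring
            _ ≤ ((k - 2) * (n - m)) * Q := Nat.mul_le_mul_right _
                (CardBadAux.num_ineq hm'.1 hm'.2 hk1 hk2 hn)
            _ = (k - 2) * ((n - m) * Q) := by ring
            _ = (k - 2) * (n - 1).descFactorial k := by
                rw [CardBadAux.desc_id hm'.1 hm'.2 hk1 hk2 hn]
      _ = (k - 2) * (n * ((k - 2) * (n - 1).descFactorial k)) := by
          rw [sum_const, Nat.card_Icc, smul_eq_mul,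
            show k - 1 + 1 - 2 = k - 2 from by omega]
      _ ≤ (k * (k - 1) * (n - 2)) * (n - 1).descFactorial k := by
          have h5 := CardBadAux.num_ineq2 hk1 hk2 hn
          calc (k - 2) * (n * ((k - 2) * (n - 1).descFactorial k))
              = ((k - 2) * (n * (k - 2))) * (n - 1).descFactorial k := by ring
            _ ≤ (k * (k - 1) * (n - 2)) * (n - 1).descFactorial k :=
                Nat.mul_le_mul_right _ h5
      _ = k * (k - 1) * (n - 2) * (n - 1).descFactorial k := by ring
  have hdesc : (n - 1).descFactorial k = k.factorial * (n - 1).choose k :=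
    Nat.descFactorial_eq_factorial_mul_choose _ _
  have hfinal : (n * B.card) * ((n - 2) * k.factorial)
      ≤ (k * (k - 1) * Nat.choose (n - 1) k) * ((n - 2) * k.factorial) := by
    calc (n * B.card) * ((n - 2) * k.factorial)
        = n * ((n - 2) * (B.card * k.factorial)) := by ring
      _ ≤ n * ((n - 2) * (CardBadAux.FailSet n k).card) :=
          Nat.mul_le_mul_left _ (Nat.mul_le_mul_left _ hC1)
      _ ≤ k * (k - 1) * (n - 2) * (n - 1).descFactorial k := hmain
      _ = (k * (k - 1) * Nat.choose (n - 1) k) * ((n - 2) * k.factorial) := by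
          rw [hdesc]; ring
  exact Nat.le_of_mul_le_mul_right hfinal
    (Nat.mul_pos (by omega) k.factorial_pos)
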